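/- If f is (γ,μ)-strongly quasar-convex with minimizer x*, then f(x) ≥ f(x*) + (γμ/(2(2−γ)))·‖x* − x‖² for all x. -/

import Mathlib

open RealInnerProductSpace

set_option maxHeartbeats 1000000 in
theorem strongly_quasar_growth {n : ℕ}
    (f : EuclideanSpace ℝ (Fin n) → ℝ) (hdiff : Differentiable ℝ f)
    (γ μ : ℝ) (hγ : γ ∈ Set.Ioc (0:ℝ) 1) (hμ : 0 ≤ μ)
    (xstar : EuclideanSpace ℝ (Fin n)) (hmin : ∀ x, f xstar ≤ f x)
    (hquasar : ∀ x, f xstar ≥ f x + (1/γ) * ⟪gradient f x, xstar - x⟫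
      + (μ/2) * ‖xstar - x‖^2) :
    ∀ x, f x ≥ f xstar + (γ * μ / (2 * (2 - γ))) * ‖xstar - x‖^2 := by
  obtain ⟨hγ0, hγ1⟩ := hγ
  intro x
  set v : EuclideanSpace ℝ (Fin n) := x - xstar with hv
  set D : ℝ := ‖v‖^2 with hD
  have hDnn : 0 ≤ D := sq_nonneg _
  set K : ℝ := γ * μ * D / (2 * (2 - γ)) with hK
  have h2γ : (0:ℝ) < 2 - γ := by linarith
  have hKnn : 0 ≤ K := by positivity
  set c : ℝ → EuclideanSpace ℝ (Fin n) := fun t => xstar + t • v with hc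
  set u : ℝ → ℝ := fun t => f (c t) - f xstar with hu
  have hc1 : c 1 = x := by simp [hc, hv]
  have hc0 : c 0 = xstar := by simp [hc]
  have hunn : ∀ t, 0 ≤ u t := fun t => by simpa [hu] using hmin (c t)
  -- derivative of u along the segment
  have hder : ∀ t : ℝ, HasDerivAt u ⟪gradient f (c t), v⟫ t := by
    intro t
    have hcder : HasDerivAt c v t := by
      simpa [hc] using ((hasDerivAt_id t).smul_const v).const_add xstar
    have hf := ((hdiff (c t)).hasGradientAt.hasFDerivAt).comp_hasDerivAt t hcder
    simpa [hu, InnerProductSpace.toDual_apply_apply] using hf.sub_const (f xstar)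
  -- gradient vanishes at the minimizer
  have hgrad0 : ⟪gradient f xstar, v⟫ = 0 := by
    have hloc : IsLocalMin f xstar := Filter.Eventually.of_forall hmin
    have h1 : HasFDerivAt f
        (InnerProductSpace.toDual ℝ _ (gradient f xstar)) xstar :=
      (hdiff xstar).hasGradientAt.hasFDerivAt
    have h2 := hloc.fderiv_eq_zero
    have h3 : InnerProductSpace.toDual ℝ _ (gradient f xstar) = 0 := by
      rw [← h1.fderiv, h2]
    calc ⟪gradient f xstar, v⟫
        = InnerProductSpace.toDual ℝ _ (gradient f xstar) v :=
          (InnerProductSpace.toDual_apply_apply).symm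
      _ = 0 := by rw [h3]; rfl
  -- key differential inequality on (0,1]
  have hkey : ∀ t : ℝ, 0 < t →
      γ * u t + (γ * μ / 2) * t^2 * D ≤ ⟪gradient f (c t), v⟫ * t := by
    intro t ht
    have hq := hquasar (c t)
    have hsub : xstar - c t = -(t • v) := by simp [hc]
    have hnorm : ‖xstar - c t‖^2 = t^2 * D := by
      rw [hsub, norm_neg, norm_smul]
      simp [hD, mul_pow, abs_of_pos ht]
    have hip : ⟪gradient f (c t), xstar - c t⟫ = -(t * ⟪gradient f (c t), v⟫) := by
      rw [hsub, inner_neg_right, real_inner_smul_right]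
    rw [hip, hnorm] at hq
    have hγ0' : γ ≠ 0 := ne_of_gt hγ0
    have hq' : f xstar * γ ≥ (f (c t) + (1/γ) * -(t * ⟪gradient f (c t), v⟫)
        + μ/2 * (t^2*D)) * γ := by
      exact mul_le_mul_of_nonneg_right hq (le_of_lt hγ0)
    have hexp : (1/γ) * -(t * ⟪gradient f (c t), v⟫) * γ
        = -(t * ⟪gradient f (c t), v⟫) := by field_simp
    simp only [hu]
    nlinarith [hq', hexp]
  -- the auxiliary function Φ
  set Φ : ℝ → ℝ := fun t => u t * t ^ (-γ) - K * t ^ ((2:ℝ) - γ) with hΦ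
  have hΦder : ∀ t : ℝ, 0 < t → HasDerivAt Φ
      (⟪gradient f (c t), v⟫ * t ^ (-γ) + u t * (-γ * t ^ (-γ - 1))
        - K * ((2 - γ) * t ^ ((2:ℝ) - γ - 1))) t := by
    intro t ht
    have h1 : HasDerivAt (fun s : ℝ => s ^ (-γ)) (-γ * t ^ (-γ - 1)) t :=
      Real.hasDerivAt_rpow_const (Or.inl (ne_of_gt ht))
    have h2 : HasDerivAt (fun s : ℝ => s ^ ((2:ℝ) - γ)) ((2 - γ) * t ^ ((2:ℝ) - γ - 1)) t :=
      Real.hasDerivAt_rpow_const (Or.inl (ne_of_gt ht))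
    exact ((hder t).mul h1).sub (h2.const_mul K)
  have hΦder_nonneg : ∀ t : ℝ, 0 < t →
      0 ≤ ⟪gradient f (c t), v⟫ * t ^ (-γ) + u t * (-γ * t ^ (-γ - 1))
        - K * ((2 - γ) * t ^ ((2:ℝ) - γ - 1)) := by
    intro t ht
    have hA : (0:ℝ) < t ^ (-γ) := Real.rpow_pos_of_pos ht _
    have e1 : t ^ (-γ - 1) = t ^ (-γ) / t := by
      rw [Real.rpow_sub ht, Real.rpow_one]
    have e2 : t ^ ((2:ℝ) - γ - 1) = t ^ (-γ) * t^2 / t := by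
      have : (2:ℝ) - γ - 1 = (-γ) + 1 := by ring
      rw [this, Real.rpow_add ht, Real.rpow_one]
      field_simp
    rw [e1, e2]
    have hk := hkey t ht
    have hK2 : K * (2 - γ) = γ * μ * D / 2 := by
      rw [hK]; field_simp
    have ht' : t ≠ 0 := ne_of_gt ht
    have : ⟪gradient f (c t), v⟫ * t ^ (-γ) + u t * (-γ * (t ^ (-γ) / t))
        - K * ((2 - γ) * (t ^ (-γ) * t^2 / t))
        = (t ^ (-γ) / t) * (⟪gradient f (c t), v⟫ * t - γ * u t - K * (2-γ) * t^2) := by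
      field_simp
      ring
    rw [this, hK2]
    apply mul_nonneg (le_of_lt (div_pos hA ht))
    nlinarith [hk]
  -- Φ is monotone on [ε,1] hence Φ ε ≤ Φ 1
  have hmono : ∀ ε : ℝ, ε ∈ Set.Ioo (0:ℝ) 1 → Φ ε ≤ Φ 1 := by
    intro ε hε
    have hmo : MonotoneOn Φ (Set.Icc ε 1) := by
      apply monotoneOn_of_deriv_nonneg (convex_Icc ε 1)
      · intro t ht
        exact ((hΦder t (lt_of_lt_of_le hε.1 ht.1)).differentiableAt.continuousAt).continuousWithinAt
      · intro t ht
        rw [interior_Icc] at ht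
        exact ((hΦder t (lt_trans hε.1 ht.1)).differentiableAt).differentiableWithinAt
      · intro t ht
        rw [interior_Icc] at ht
        have h := hΦder t (lt_trans hε.1 ht.1)
        rw [h.deriv]
        exact hΦder_nonneg t (lt_trans hε.1 ht.1)
    exact hmo ⟨le_refl ε, le_of_lt hε.2⟩ ⟨le_of_lt hε.2, le_refl 1⟩ (le_of_lt hε.2)
  -- Φ tends to 0 at 0+
  have hlim : Filter.Tendsto Φ (nhdsWithin 0 (Set.Ioi 0)) (nhds 0) := by
    have hu0 : u 0 = 0 := by simp [hu, hc0]
    have hslope : Filter.Tendsto (fun t => u t / t) (nhdsWithin 0 (Set.Ioi 0)) (nhds 0) := by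
      have h := (hasDerivAt_iff_tendsto_slope.mp (hder 0))
      rw [hc0, hgrad0] at h
      have h' := h.mono_left (nhdsWithin_mono 0 (by intro y hy; exact ne_of_gt hy : Set.Ioi (0:ℝ) ⊆ {0}ᶜ))
      refine h'.congr' ?_
      filter_upwards [self_mem_nhdsWithin] with t ht
      simp [slope, hu0, div_eq_inv_mul]
    have hbound : ∀ᶠ t in nhdsWithin (0:ℝ) (Set.Ioi 0), ‖Φ t‖ ≤ u t / t + K * t := by
      filter_upwards [self_mem_nhdsWithin,
        Icc_mem_nhdsGT_of_mem (by norm_num : (0:ℝ) ∈ Set.Ico 0 1)] with t ht ht1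
      have ht0 : (0:ℝ) < t := ht
      have ht1' : t ≤ 1 := ht1.2
      have b1 : u t * t ^ (-γ) ≤ u t / t := by
        have : t ^ (-γ) ≤ t ^ (-1 : ℝ) :=
          Real.rpow_le_rpow_of_exponent_ge ht0 ht1' (by linarith)
        calc u t * t ^ (-γ) ≤ u t * t ^ (-1:ℝ) :=
              mul_le_mul_of_nonneg_left this (hunn t)
          _ = u t / t := by rw [Real.rpow_neg_one]; ring
      have b2 : K * t ^ ((2:ℝ) - γ) ≤ K * t := by
        have : t ^ ((2:ℝ) - γ) ≤ t ^ (1:ℝ) :=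
          Real.rpow_le_rpow_of_exponent_ge ht0 ht1' (by linarith)
        rw [Real.rpow_one] at this
        exact mul_le_mul_of_nonneg_left this hKnn
      have hΦnn1 : u t * t ^ (-γ) ≥ 0 :=
        mul_nonneg (hunn t) (le_of_lt (Real.rpow_pos_of_pos ht0 _))
      have hΦnn2 : K * t ^ ((2:ℝ) - γ) ≥ 0 :=
        mul_nonneg hKnn (le_of_lt (Real.rpow_pos_of_pos ht0 _))
      simp only [hΦ]
      rw [Real.norm_eq_abs]
      calc |u t * t ^ (-γ) - K * t ^ ((2:ℝ) - γ)|
          ≤ |u t * t ^ (-γ)| + |K * t ^ ((2:ℝ) - γ)| := abs_sub _ _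
        _ = u t * t ^ (-γ) + K * t ^ ((2:ℝ) - γ) := by
            rw [abs_of_nonneg hΦnn1, abs_of_nonneg hΦnn2]
        _ ≤ u t / t + K * t := add_le_add b1 b2
    have htK : Filter.Tendsto (fun t : ℝ => u t / t + K * t) (nhdsWithin 0 (Set.Ioi 0)) (nhds 0) := by
      have h2 : Filter.Tendsto (fun t : ℝ => K * t) (nhdsWithin 0 (Set.Ioi 0)) (nhds 0) := by
        have hcont : Filter.Tendsto (fun t : ℝ => K * t) (nhds 0) (nhds (K * 0)) :=
          (continuous_const.mul continuous_id).tendsto 0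
        simpa using hcont.mono_left nhdsWithin_le_nhds
      simpa using hslope.add h2
    exact squeeze_zero_norm' hbound htK
  -- conclude
  have hΦ1 : 0 ≤ Φ 1 := by
    refine le_of_tendsto hlim ?_
    filter_upwards [Ioo_mem_nhdsGT_of_mem (by norm_num : (0:ℝ) ∈ Set.Ico 0 1)] with t ht
    exact hmono t ht
  have hΦ1eq : Φ 1 = u 1 - K := by
    show u 1 * (1:ℝ) ^ (-γ) - K * (1:ℝ) ^ ((2:ℝ) - γ) = u 1 - K
    rw [Real.one_rpow, Real.one_rpow]; ring
  have hnormeq : ‖xstar - x‖ = ‖v‖ := by rw [hv, norm_sub_rev]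
  rw [hΦ1eq] at hΦ1
  have : f x - f xstar ≥ K := by simpa [hu, hc1] using hΦ1
  rw [hnormeq]
  rw [hK] at this
  have : f x ≥ f xstar + γ * μ * D / (2 * (2 - γ)) := by linarith
  calc f x ≥ f xstar + γ * μ * D / (2 * (2 - γ)) := this
    _ = f xstar + γ * μ / (2 * (2 - γ)) * ‖v‖^2 := by rw [hD]; ring
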